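/- Let μ be the measure on ℝ with dμ(x) = e^{x²} dx, and let f(x) = x·χ_{(0,∞)}(x). Then the centered maximal function satisfies M^c f(x) = ∞ for every x ≥ 0. -/

import Mathlib

open MeasureTheory Metric Filter Set ENNReal

/-- The centered Hardy–Littlewood maximal function of `f` at `x`,
with respect to the measure `μ`. -/
noncomputable def centeredMaximal {X : Type*} [MeasurableSpace X] [PseudoMetricSpace X]
    (μ : Measure X) (f : X → ℝ) (x : X) : ℝ≥0∞ :=
  ⨆ (r : ℝ) (_ : 0 < r),
    (∫⁻ y in Metric.ball x r, ENNReal.ofReal |f y| ∂μ) / μ (Metric.ball x r)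

/-- The non-centered Hardy–Littlewood maximal function of `f` at `x`:
the supremum is taken over all open balls containing `x`. -/
noncomputable def noncenteredMaximal {X : Type*} [MeasurableSpace X] [PseudoMetricSpace X]
    (μ : Measure X) (f : X → ℝ) (x : X) : ℝ≥0∞ :=
  ⨆ (c : X) (r : ℝ) (_ : 0 < r) (_ : x ∈ Metric.ball c r),
    (∫⁻ y in Metric.ball c r, ENNReal.ofReal |f y| ∂μ) / μ (Metric.ball c r)

/-- `f ∈ L¹_loc(μ)`: `∫_B |f| dμ < ∞` for every open ball `B`. -/
def LocallyIntegrableBall {X : Type*} [MeasurableSpace X] [PseudoMetricSpace X]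
    (μ : Measure X) (f : X → ℝ) : Prop :=
  ∀ (c : X) (r : ℝ), 0 < r → (∫⁻ y in Metric.ball c r, ENNReal.ofReal |f y| ∂μ) < ⊤


lemma expsq_cont : Continuous fun y : ℝ => Real.exp (y ^ 2) :=
  Real.continuous_exp.comp (continuous_pow 2)

lemma ftc_aux (a b : ℝ) :
    ∫ y in a..b, y * Real.exp (y ^ 2) = (Real.exp (b ^ 2) - Real.exp (a ^ 2)) / 2 := by
  have h : ∀ y : ℝ, HasDerivAt (fun t : ℝ => Real.exp (t ^ 2) / 2) (y * Real.exp (y ^ 2)) y := by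
    intro y
    have h1 : HasDerivAt (fun t : ℝ => t ^ 2) (2 * y) y := by
      simpa using hasDerivAt_pow 2 y
    have h2 := ((Real.hasDerivAt_exp (y ^ 2)).comp y h1).div_const 2
    exact h2.congr_deriv (by ring)
  rw [intervalIntegral.integral_eq_sub_of_hasDerivAt (fun y _ => h y)
    ((continuous_id.mul expsq_cont).intervalIntegrable a b)]
  ring

lemma abs_int_aux (b : ℝ) (hb : 0 ≤ b) :
    ∫ y in (-b)..b, |y| * Real.exp (y ^ 2) = Real.exp (b ^ 2) - 1 := by
  have hii : ∀ p q : ℝ, IntervalIntegrable (fun y : ℝ => |y| * Real.exp (y ^ 2)) volume p q :=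
    fun p q => (continuous_abs.mul expsq_cont).intervalIntegrable p q
  rw [← intervalIntegral.integral_add_adjacent_intervals (hii (-b) 0) (hii 0 b)]
  have h1 : ∫ y in (-b)..0, |y| * Real.exp (y ^ 2) = (Real.exp (b ^ 2) - 1) / 2 := by
    have : ∫ y in (-b)..0, |y| * Real.exp (y ^ 2)
        = ∫ y in (-b)..0, -(y * Real.exp (y ^ 2)) := by
      apply intervalIntegral.integral_congr
      intro y hy
      rw [Set.uIcc_of_le (by linarith : -b ≤ 0)] at hy
      simp only [abs_of_nonpos hy.2]; ring
    rw [this, intervalIntegral.integral_neg, ftc_aux]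
    simp; ring
  have h2 : ∫ y in (0:ℝ)..b, |y| * Real.exp (y ^ 2) = (Real.exp (b ^ 2) - 1) / 2 := by
    have : ∫ y in (0:ℝ)..b, |y| * Real.exp (y ^ 2)
        = ∫ y in (0:ℝ)..b, y * Real.exp (y ^ 2) := by
      apply intervalIntegral.integral_congr
      intro y hy
      rw [Set.uIcc_of_le hb] at hy
      simp only [abs_of_nonneg hy.1]
    rw [this, ftc_aux]; simp
  rw [h1, h2]; ring

set_option maxHeartbeats 1000000 in
theorem aux_centeredMaximal_eq_top_of_nonneg (μ : Measure ℝ)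
    (hμ : μ = volume.withDensity (fun x => ENNReal.ofReal (Real.exp (x ^ 2))))
    (f : ℝ → ℝ) (hf : f = fun x => if 0 < x then x else 0) :
    ∀ x : ℝ, 0 ≤ x → (⨆ (r : ℝ) (_ : 0 < r),
    (∫⁻ y in Metric.ball x r, ENNReal.ofReal |f y| ∂μ) / μ (Metric.ball x r)) = ⊤ := by
  have hfeq : f = fun y => max y 0 := by
    rw [hf]; funext y
    rcases lt_or_ge 0 y with h | h
    · simp [h, max_eq_left h.le]
    · simp [not_lt.mpr h, max_eq_right h]
  have hfnn : ∀ y, 0 ≤ f y := by intro y; rw [hfeq]; exact le_max_right _ _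
  have hFcont : Continuous fun y : ℝ => Real.exp (y ^ 2) * f y := by
    rw [hfeq]; exact expsq_cont.mul (continuous_id.max continuous_const)
  have hIexp : ∀ p q : ℝ, IntegrableOn (fun y : ℝ => Real.exp (y ^ 2)) (Set.Ioo p q) volume :=
    fun p q => (expsq_cont.integrableOn_Icc).mono_set Set.Ioo_subset_Icc_self
  have hIF : ∀ p q : ℝ, IntegrableOn (fun y : ℝ => Real.exp (y ^ 2) * f y) (Set.Ioo p q) volume :=
    fun p q => (hFcont.integrableOn_Icc).mono_set Set.Ioo_subset_Icc_self
  have hdmeas : Measurable fun y : ℝ => ENNReal.ofReal (Real.exp (y ^ 2)) :=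
    expsq_cont.measurable.ennreal_ofReal
  have hgmeas : Measurable fun y : ℝ => ENNReal.ofReal |f y| := by
    rw [hfeq]
    exact ((continuous_id.max continuous_const).abs.measurable).ennreal_ofReal
  subst hμ
  intro x hx
  apply ENNReal.eq_top_of_forall_nnreal_le
  intro q
  set A : ℝ := max (q : ℝ) 1 with hAdef
  have hA1 : (1:ℝ) ≤ A := le_max_right _ _
  have hA0 : (0:ℝ) < A := lt_of_lt_of_le one_pos hA1
  have hq : (q : ℝ≥0∞) ≤ ENNReal.ofReal A := by
    rw [← ENNReal.ofReal_coe_nnreal]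
    exact ENNReal.ofReal_le_ofReal (le_max_left _ _)
  refine le_trans hq ?_
  set c : ℝ := x + 4 * A with hcdef
  set b : ℝ := c + x + 8 * A + 3 with hbdef
  set r : ℝ := b - x with hrdef
  set a : ℝ := x - r with hadef
  have hc0 : (0:ℝ) < c := by rw [hcdef]; linarith
  have hcb : c < b := by rw [hbdef]; linarith
  have hb1 : (1:ℝ) ≤ b := by rw [hbdef]; linarith
  have hr0 : 0 < r := by rw [hrdef, hbdef]; linarith
  have hanb : -b ≤ a := by rw [hadef, hrdef]; linarith
  have hac : a ≤ c := by rw [hadef, hrdef]; linarith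
  have hab : a < b := by rw [hadef]; linarith
  have hEc : (0:ℝ) < Real.exp (c ^ 2) := Real.exp_pos _
  have hEb : (0:ℝ) < Real.exp (b ^ 2) := Real.exp_pos _
  have hEb1 : (1:ℝ) ≤ Real.exp (b ^ 2) := Real.one_le_exp (sq_nonneg b)
  have hkey : (8 * A * b + 2) * Real.exp (c ^ 2) ≤ Real.exp (b ^ 2) := by
    have h1 : Real.exp (b ^ 2) = Real.exp (c ^ 2) * Real.exp (b ^ 2 - c ^ 2) := by
      rw [← Real.exp_add]; ring_nf
    have h2 : b ^ 2 - c ^ 2 + 1 ≤ Real.exp (b ^ 2 - c ^ 2) := Real.add_one_le_exp _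
    have h3 : (8 * A + 3) * b ≤ (b - c) * (b + c) := by
      apply mul_le_mul (by rw [hbdef]; linarith) (by linarith) (by linarith) (by linarith)
    nlinarith [mul_le_mul_of_nonneg_left h2 hEc.le]
  -- the ball and the two integrals
  have hball : Metric.ball x r = Set.Ioo a b := by
    rw [Real.ball_eq_Ioo, ← hadef, show x + r = b by rw [hrdef]; ring]
  set D : ℝ := ∫ y in Set.Ioo a b, Real.exp (y ^ 2) with hDdef
  set Nm : ℝ := ∫ y in Set.Ioo a b, Real.exp (y ^ 2) * f y with hNmdef
  have hden : (volume.withDensity fun x => ENNReal.ofReal (Real.exp (x ^ 2))) (Set.Ioo a b)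
      = ENNReal.ofReal D := by
    rw [withDensity_apply _ measurableSet_Ioo,
      ← MeasureTheory.ofReal_integral_eq_lintegral_ofReal (hIexp a b)
        (ae_of_all _ fun y => Real.exp_nonneg _)]
  have hnum : (∫⁻ y in Set.Ioo a b, ENNReal.ofReal |f y|
        ∂(volume.withDensity fun x => ENNReal.ofReal (Real.exp (x ^ 2))))
      = ENNReal.ofReal Nm := by
    rw [setLIntegral_withDensity_eq_setLIntegral_mul volume hdmeas hgmeas measurableSet_Ioo]
    have hpt : ∀ y : ℝ,
        ((fun y : ℝ => ENNReal.ofReal (Real.exp (y ^ 2))) *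
          fun y => ENNReal.ofReal |f y|) y
          = ENNReal.ofReal (Real.exp (y ^ 2) * f y) := by
      intro y
      simp only [Pi.mul_apply]
      rw [abs_of_nonneg (hfnn y), ENNReal.ofReal_mul (Real.exp_nonneg _)]
    rw [lintegral_congr hpt,
      ← MeasureTheory.ofReal_integral_eq_lintegral_ofReal (hIF a b)
        (ae_of_all _ fun y => mul_nonneg (Real.exp_nonneg _) (hfnn y))]
  -- positivity of D
  have hD_pos : 0 < D := by
    have h2 : ∫ y in Set.Ioo a b, (1:ℝ) = b - a := by
      rw [setIntegral_const, Real.volume_real_Ioo_of_le hab.le]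
      simp
    have h3 : ∫ y in Set.Ioo a b, (1:ℝ) ≤ D := by
      apply setIntegral_mono_on
        (integrableOn_const measure_Ioo_lt_top.ne) (hIexp a b) measurableSet_Ioo
      intro y _
      exact Real.one_le_exp (sq_nonneg y)
    linarith
  -- lower bound on Nm
  have hNm_lb : (Real.exp (b ^ 2) - Real.exp (c ^ 2)) / 2 ≤ Nm := by
    have h1 : ∫ y in Set.Ioo c b, Real.exp (y ^ 2) * f y ≤ Nm := by
      apply setIntegral_mono_set (hIF a b)
        (ae_of_all _ fun y => mul_nonneg (Real.exp_nonneg _) (hfnn y))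
      exact HasSubset.Subset.eventuallyLE (Set.Ioo_subset_Ioo hac le_rfl)
    have h2 : ∫ y in Set.Ioo c b, Real.exp (y ^ 2) * f y
        = ∫ y in Set.Ioo c b, y * Real.exp (y ^ 2) := by
      apply setIntegral_congr_fun measurableSet_Ioo
      intro y hy
      rw [hfeq]
      simp only
      rw [max_eq_left (le_of_lt (lt_trans hc0 hy.1))]
      ring
    have h3 : ∫ y in Set.Ioo c b, y * Real.exp (y ^ 2)
        = (Real.exp (b ^ 2) - Real.exp (c ^ 2)) / 2 := by
      rw [← integral_Ioc_eq_integral_Ioo, ← intervalIntegral.integral_of_le hcb.le, ftc_aux]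
    linarith
  -- upper bound on D
  have hD_ub : D ≤ 2 * b * Real.exp (c ^ 2) + (Real.exp (b ^ 2) - 1) / c := by
    have h1 : D ≤ ∫ y in Set.Ioo (-b) b, Real.exp (y ^ 2) := by
      apply setIntegral_mono_set (hIexp (-b) b) (ae_of_all _ fun y => Real.exp_nonneg _)
      exact HasSubset.Subset.eventuallyLE (Set.Ioo_subset_Ioo hanb le_rfl)
    have hgcont : Continuous fun y : ℝ => Real.exp (c ^ 2) + |y| * Real.exp (y ^ 2) / c :=
      continuous_const.add ((continuous_abs.mul expsq_cont).div_const c)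
    have h2 : ∫ y in Set.Ioo (-b) b, Real.exp (y ^ 2)
        ≤ ∫ y in Set.Ioo (-b) b, (Real.exp (c ^ 2) + |y| * Real.exp (y ^ 2) / c) := by
      apply setIntegral_mono_on (hIexp (-b) b)
        ((hgcont.integrableOn_Icc).mono_set Set.Ioo_subset_Icc_self) measurableSet_Ioo
      intro y _
      rcases le_or_gt |y| c with h | h
      · have he : Real.exp (y ^ 2) ≤ Real.exp (c ^ 2) :=
          Real.exp_le_exp.mpr (by nlinarith [abs_nonneg y, sq_abs y])
        have h0 : 0 ≤ |y| * Real.exp (y ^ 2) / c := by positivity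
        linarith
      · have h1' : 1 ≤ |y| / c := (one_le_div hc0).mpr h.le
        have he : Real.exp (y ^ 2) ≤ |y| * Real.exp (y ^ 2) / c := by
          have := mul_le_mul_of_nonneg_right h1' (Real.exp_pos (y ^ 2)).le
          calc Real.exp (y ^ 2) = 1 * Real.exp (y ^ 2) := by ring
            _ ≤ |y| / c * Real.exp (y ^ 2) := this
            _ = |y| * Real.exp (y ^ 2) / c := by ring
        linarith [Real.exp_pos (c ^ 2)]
    have h3 : ∫ y in Set.Ioo (-b) b, (Real.exp (c ^ 2) + |y| * Real.exp (y ^ 2) / c)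
        = 2 * b * Real.exp (c ^ 2) + (Real.exp (b ^ 2) - 1) / c := by
      rw [← integral_Ioc_eq_integral_Ioo,
        ← intervalIntegral.integral_of_le (by linarith : -b ≤ b),
        intervalIntegral.integral_add (f := fun _ => Real.exp (c ^ 2))
          (g := fun y => |y| * Real.exp (y ^ 2) / c)
          ((continuous_const.intervalIntegrable _ _))
          (((continuous_abs.mul expsq_cont).div_const c).intervalIntegrable _ _),
        intervalIntegral.integral_const, intervalIntegral.integral_div,
        abs_int_aux b (by linarith)]
      simp only [smul_eq_mul]
      ring
    linarith
  -- conclude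
  clear_value A c b r a D Nm
  have hterm : ENNReal.ofReal A ≤ ENNReal.ofReal Nm / ENNReal.ofReal D := by
    rw [ENNReal.le_div_iff_mul_le (Or.inl (ENNReal.ofReal_pos.mpr hD_pos).ne')
      (Or.inl ENNReal.ofReal_ne_top), ← ENNReal.ofReal_mul hA0.le]
    apply ENNReal.ofReal_le_ofReal
    have hAc : A / c ≤ 1 / 4 := by
      rw [div_le_div_iff₀ hc0 (by norm_num)]
      rw [hcdef]; nlinarith
    have h4 : A * ((Real.exp (b ^ 2) - 1) / c) ≤ Real.exp (b ^ 2) / 4 := by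
      have heq : A * ((Real.exp (b ^ 2) - 1) / c) = A / c * (Real.exp (b ^ 2) - 1) := by ring
      rw [heq]
      have := mul_le_mul hAc (by linarith : Real.exp (b ^ 2) - 1 ≤ Real.exp (b ^ 2))
        (by linarith) (by norm_num)
      linarith
    calc A * D ≤ A * (2 * b * Real.exp (c ^ 2) + (Real.exp (b ^ 2) - 1) / c) :=
          mul_le_mul_of_nonneg_left hD_ub hA0.le
      _ = 2 * (A * b) * Real.exp (c ^ 2) + A * ((Real.exp (b ^ 2) - 1) / c) := by ring
      _ ≤ (Real.exp (b ^ 2) - Real.exp (c ^ 2)) / 2 := by linarith [hkey, h4]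
      _ ≤ Nm := hNm_lb
  refine le_trans ?_ (le_iSup₂ (f := fun (r : ℝ) (_ : 0 < r) =>
    (∫⁻ y in Metric.ball x r, ENNReal.ofReal |f y|
      ∂(volume.withDensity fun x => ENNReal.ofReal (Real.exp (x ^ 2)))) /
      (volume.withDensity fun x => ENNReal.ofReal (Real.exp (x ^ 2))) (Metric.ball x r)) r hr0)
  rw [hball, hnum, hden]
  exact hterm

/-- For `dμ = e^{x²} dx` on `ℝ` and `f(x) = x·χ_{(0,∞)}(x)`, the centered
maximal function `M^c f` is infinite at every `x ≥ 0`. -/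
theorem centeredMaximal_eq_top_of_nonneg (μ : Measure ℝ)
    (hμ : μ = volume.withDensity (fun x => ENNReal.ofReal (Real.exp (x ^ 2))))
    (f : ℝ → ℝ) (hf : f = fun x => if 0 < x then x else 0) :
    ∀ x : ℝ, 0 ≤ x → centeredMaximal μ f x = ⊤ := by
  intro x hx
  unfold centeredMaximal
  exact aux_centeredMaximal_eq_top_of_nonneg μ hμ f hf x hx
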